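/- Unfolding intertwines 2-colored mutation with group mutation: if C is a skew-symmetric n×n matrix over 𝕐 and k is any index, then the unfolding Ū(C) is a skew-symmetric 2n×2n integer matrix whose (k, k+n) entry is 0, and μ_{k+n}( μ_k( Ū(C) ) ) = Ū( μ_k(C) ). -/

import Mathlib

/-- Positive part of a split-complex integer `z = a + bε`:
`z⁺ = max(a,0) + max(b,0)·ε`. -/
def Zsqrtd.posPart (z : Zsqrtd 1) : Zsqrtd 1 := ⟨max z.re 0, max z.im 0⟩

/-- Negative part of a split-complex integer `z = a + bε`:
`z⁻ = min(a,0) + min(b,0)·ε`. -/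
def Zsqrtd.negPart (z : Zsqrtd 1) : Zsqrtd 1 := ⟨min z.re 0, min z.im 0⟩

/-- Mutation at index `k` of a matrix over the split-complex integers `𝕐 = ℤ[ε]/(ε²−1)`. -/
def twoColoredMutation {n : ℕ} (C : Matrix (Fin n) (Fin n) (Zsqrtd 1)) (k : Fin n) :
    Matrix (Fin n) (Fin n) (Zsqrtd 1) :=
  fun i j =>
    if i = k ∨ j = k then -C i j
    else C i j + (C i k).posPart * (C k j).posPart - (C i k).negPart * (C k j).negPart

/-- Mutation at index `k` of an integer matrix over an arbitrary index type. -/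
def intMutation {ι : Type*} [DecidableEq ι] (B : Matrix ι ι ℤ) (k : ι) :
    Matrix ι ι ℤ :=
  fun i j =>
    if i = k ∨ j = k then -B i j
    else B i j + max (B i k) 0 * max (B k j) 0 - min (B i k) 0 * min (B k j) 0

/-- The unfolding of a matrix `C = A + εB` over the split-complex integers is the
`2n×2n` integer block matrix `[[A, B], [B, A]]`; the partner of index `Sum.inl k`
is `Sum.inr k` (i.e. `k + n`). -/
def unfoldMatrix {n : ℕ} (C : Matrix (Fin n) (Fin n) (Zsqrtd 1)) :
    Matrix (Fin n ⊕ Fin n) (Fin n ⊕ Fin n) ℤ :=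
  Matrix.fromBlocks (fun i j => (C i j).re) (fun i j => (C i j).im)
    (fun i j => (C i j).im) (fun i j => (C i j).re)

theorem unfoldMatrix_inl_inl {n : ℕ} (C : Matrix (Fin n) (Fin n) (Zsqrtd 1)) (i j : Fin n) :
    unfoldMatrix C (Sum.inl i) (Sum.inl j) = (C i j).re := rfl

theorem unfoldMatrix_inl_inr {n : ℕ} (C : Matrix (Fin n) (Fin n) (Zsqrtd 1)) (i j : Fin n) :
    unfoldMatrix C (Sum.inl i) (Sum.inr j) = (C i j).im := rfl

theorem unfoldMatrix_inr_inl {n : ℕ} (C : Matrix (Fin n) (Fin n) (Zsqrtd 1)) (i j : Fin n) :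
    unfoldMatrix C (Sum.inr i) (Sum.inl j) = (C i j).im := rfl

theorem unfoldMatrix_inr_inr {n : ℕ} (C : Matrix (Fin n) (Fin n) (Zsqrtd 1)) (i j : Fin n) :
    unfoldMatrix C (Sum.inr i) (Sum.inr j) = (C i j).re := rfl

set_option maxHeartbeats 2000000 in
/-- Unfolding intertwines 2-colored mutation with group mutation: for a skew-symmetric
matrix `C` over `𝕐`, the unfolding is skew-symmetric with vanishing `(k, k+n)` entry,
and mutating the unfolding at `k` and then at its partner `k+n` gives the unfolding of
the mutation of `C` at `k`. -/
theorem unfold_intertwines_mutation {n : ℕ} (C : Matrix (Fin n) (Fin n) (Zsqrtd 1))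
    (hC : ∀ i j, C j i = -C i j) (k : Fin n) :
    (∀ i j, unfoldMatrix C j i = -unfoldMatrix C i j) ∧
    unfoldMatrix C (Sum.inl k) (Sum.inr k) = 0 ∧
    intMutation (intMutation (unfoldMatrix C) (Sum.inl k)) (Sum.inr k)
      = unfoldMatrix (twoColoredMutation C k) := by
  have hkk : C k k = 0 := by
    have h := hC k k
    have h2 : (2:ℤ√1) * C k k = 0 := by linear_combination h
    have hre := congrArg Zsqrtd.re h2
    have him := congrArg Zsqrtd.im h2
    simp [Zsqrtd.re_mul, Zsqrtd.im_mul] at hre him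
    ext <;> simp [hre, him]
  have hBkk : (C k k).im = 0 := by rw [hkk]; rfl
  have hAkk : (C k k).re = 0 := by rw [hkk]; rfl
  refine ⟨?_, ?_, ?_⟩
  · rintro (i|i) (j|j) <;>
      simp [unfoldMatrix, Matrix.fromBlocks, hC i j]
  · simp [unfoldMatrix, Matrix.fromBlocks, hBkk]
  · funext i j
    rcases i with i | i <;> rcases j with j | j <;>
      by_cases hi : i = k <;> by_cases hj : j = k <;>
      simp [intMutation, unfoldMatrix_inl_inl, unfoldMatrix_inl_inr,
        unfoldMatrix_inr_inl, unfoldMatrix_inr_inr, twoColoredMutation,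
        Matrix.fromBlocks_apply₁₁, Matrix.fromBlocks_apply₁₂,
        Matrix.fromBlocks_apply₂₁, Matrix.fromBlocks_apply₂₂,
        Zsqrtd.posPart, Zsqrtd.negPart, Zsqrtd.re_add, Zsqrtd.im_add,
        Zsqrtd.re_sub, Zsqrtd.im_sub, Zsqrtd.re_mul, Zsqrtd.im_mul,
        hi, hj, hBkk, hAkk] <;> ring
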